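/- For n ≥ 1 and f(x) = -x + x^{2n}, one has f(f(x)) = x - 2n·x^{4n-1} + O(x^{4n}) near 0. That is, the coefficients of x^j in f∘f vanish for 2 ≤ j ≤ 4n-2 and the coefficient of x^{4n-1} equals -2n. -/

import Mathlib

open Polynomial Finset

lemma iterDeriv_poly (p : ℝ[X]) (j : ℕ) :
    iteratedDeriv j (fun x => p.eval x) 0 = (j.factorial : ℝ) * p.coeff j := by
  have h : ∀ q : ℝ[X], iteratedDeriv j (fun x => q.eval x) = fun x => (derivative^[j] q).eval x := by
    induction j with
    | zero => intro q; simp [iteratedDeriv_zero]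
    | succ k ih =>
      intro q
      rw [iteratedDeriv_succ, ih q]
      funext x
      rw [Function.iterate_succ_apply']
      exact Polynomial.deriv _
  rw [h p]
  simp only
  rw [← coeff_zero_eq_eval_zero, coeff_iterate_derivative, zero_add,
    Nat.descFactorial_self, nsmul_eq_mul]

lemma coeff_pow_aux (n j : ℕ) :
    ((X ^ (2 * n) - X : ℝ[X]) ^ (2 * n)).coeff j =
      ∑ k ∈ range (2 * n + 1),
        (if j = (2 * n - 1) * k + 2 * n then ((-1 : ℝ)) ^ (2 * n - k) * ((2 * n).choose k : ℝ) else 0) := by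
  have : (X ^ (2 * n) - X : ℝ[X]) ^ (2 * n) =
      ∑ k ∈ range (2 * n + 1),
        C (((-1 : ℝ)) ^ (2 * n - k) * ((2 * n).choose k : ℝ)) * X ^ ((2 * n - 1) * k + 2 * n) := by
    rw [sub_eq_add_neg, add_pow]
    refine Finset.sum_congr rfl fun k hk => ?_
    have hk' : k ≤ 2 * n := by simpa using Nat.lt_succ_iff.mp (mem_range.mp hk)
    have he : (2 * n - 1) * k + 2 * n = 2 * n * k + (2 * n - k) := by
      have h1 : (2 * n - 1) * k = 2 * n * k - k := by rw [Nat.sub_mul, one_mul]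
      have h2 : k ≤ 2 * n * k := by
        rcases Nat.eq_zero_or_pos n with h | h
        · omega
        · exact Nat.le_mul_of_pos_left k (by omega)
      omega
    rw [he, neg_pow, ← pow_mul, pow_add]
    simp only [map_mul, map_pow, map_neg, map_one, map_natCast]
    ring
  rw [this, finset_sum_coeff]
  refine Finset.sum_congr rfl fun k hk => ?_
  rw [coeff_C_mul, coeff_X_pow]
  split <;> simp

theorem stmt7 (n : ℕ) (hn : 1 ≤ n) (f : ℝ → ℝ)
    (hf : ∀ x, f x = -x + x ^ (2 * n)) :
    (∀ j, 2 ≤ j → j ≤ 4 * n - 2 → iteratedDeriv j (f ∘ f) 0 = 0) ∧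
    iteratedDeriv (4 * n - 1) (f ∘ f) 0 / ((4 * n - 1).factorial : ℝ) = -(2 * (n : ℝ)) := by
  set p : ℝ[X] := X ^ (2 * n) - X with hp
  have hfe : ∀ x, f x = p.eval x := by intro x; simp [hf, hp]; ring
  have hff : (f ∘ f) = fun x => (p.comp p).eval x := by
    funext x; simp [Function.comp, hfe, eval_comp]
  have hcomp : p.comp p = p ^ (2 * n) - p := by
    rw [hp]; simp [sub_comp, pow_comp, X_comp]
  have hcoeffp : ∀ j, p.coeff j =
      (if j = 2 * n then (1 : ℝ) else 0) - (if j = 1 then 1 else 0) := by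
    intro j; rw [hp, coeff_sub, coeff_X_pow, coeff_X]; simp [eq_comm]
  have key : ∀ j, iteratedDeriv j (f ∘ f) 0 = (j.factorial : ℝ) * (p.comp p).coeff j := by
    intro j; rw [hff, iterDeriv_poly]
  constructor
  · intro j h2 h4
    rw [key j, hcomp, coeff_sub, coeff_pow_aux, hcoeffp]
    rw [Finset.sum_eq_single 0]
    · simp only [mul_zero, zero_add, Nat.choose_zero_right, Nat.cast_one, mul_one, Nat.sub_zero]
      rw [Even.neg_one_pow ⟨n, by ring⟩]
      have hj1 : ¬ (j = 1) := by omega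
      simp [hj1]
    · intro k hk hk0
      have hkk : 1 ≤ k := Nat.one_le_iff_ne_zero.mpr hk0
      have : 2 * n - 1 ≤ (2 * n - 1) * k := Nat.le_mul_of_pos_right _ (by omega)
      rw [if_neg (by omega)]
    · simp
  · rw [key, hcomp, coeff_sub, coeff_pow_aux, hcoeffp]
    rw [Finset.sum_eq_single 1]
    · rw [if_pos (by omega), if_neg (by omega), if_neg (by omega),
        Odd.neg_one_pow ⟨n - 1, by omega⟩, Nat.choose_one_right]
      rw [sub_zero]
      have hfac : ((4 * n - 1).factorial : ℝ) ≠ 0 := by positivity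
      field_simp
      push_cast
      ring
    · intro k hk hk1
      rcases Nat.eq_zero_or_pos k with h0 | h1
      · subst h0; rw [if_neg (by omega)]
      · have hkk : 2 ≤ k := by omega
        have : (2 * n - 1) * 2 ≤ (2 * n - 1) * k := Nat.mul_le_mul_left _ hkk
        rw [if_neg (by omega)]
    · intro h; simp at h; omega
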